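/- Let R₀^! be as above and fix an integer N ≥ 4. Define F₂-linear maps φ₁, φ₂ on monomials by: φ₁(a) = a if wt₊(a) ≤ N and φ₁(a) = 0 otherwise; φ₂(a,b) = (ab)'·θ if ab ≠ 0, wt₊(ab) > N, wt₊(a) ≤ N, and wt₊(b) ≤ N, and φ₂(a,b) = 0 otherwise, where (ab)' denotes the monomial obtained from ab by deleting its last two non-θ letters (preserving wt_θ). Then for all monomials a, b of R₀^!: φ₁(ab) + φ₁(a)φ₁(b) + μ₁(φ₂(a,b)) + φ₂(μ₁(a), b) + φ₂(a, μ₁(b)) = 0, i.e., (φ₁, φ₂, 0, 0, …) satisfies the two-input A∞-morphism relation from the completed algebra to R₀^!. -/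

import Mathlib

noncomputable section

/-- Relations defining `R₀^! = F₂⟨w,z,θ⟩/(w², z², wθ+θw, zθ+θz, θ²)`.
Letters: `0 = w`, `1 = z`, `2 = θ`. -/
inductive relK : FreeAlgebra (ZMod 2) (Fin 3) → FreeAlgebra (ZMod 2) (Fin 3) → Prop
  | wsq : relK (FreeAlgebra.ι (ZMod 2) 0 * FreeAlgebra.ι (ZMod 2) 0) 0
  | zsq : relK (FreeAlgebra.ι (ZMod 2) 1 * FreeAlgebra.ι (ZMod 2) 1) 0
  | wth : relK (FreeAlgebra.ι (ZMod 2) 0 * FreeAlgebra.ι (ZMod 2) 2)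
      (FreeAlgebra.ι (ZMod 2) 2 * FreeAlgebra.ι (ZMod 2) 0)
  | zth : relK (FreeAlgebra.ι (ZMod 2) 1 * FreeAlgebra.ι (ZMod 2) 2)
      (FreeAlgebra.ι (ZMod 2) 2 * FreeAlgebra.ι (ZMod 2) 1)
  | thsq : relK (FreeAlgebra.ι (ZMod 2) 2 * FreeAlgebra.ι (ZMod 2) 2) 0

/-- The algebra `R₀^!`. -/
abbrev R0dual := RingQuot relK

/-- The free algebra `F₂⟨w,z,θ⟩`. -/
abbrev FA := FreeAlgebra (ZMod 2) (Fin 3)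

/-- The generators `w, z, θ` of `R₀^!`. -/
def gen (i : Fin 3) : R0dual := RingQuot.mkRingHom relK (FreeAlgebra.ι (ZMod 2) i)

/-- The monomial of `R₀^!` associated to a word in the letters `w, z, θ`. -/
def mono (l : List (Fin 3)) : R0dual := (l.map gen).prod

/-- The word monomial in the free algebra. -/
def wordFA (l : List (Fin 3)) : FA := (l.map (FreeAlgebra.ι (ZMod 2))).prod

/-- The weight `wt₊ = wt + wt_θ` of a word. -/
def wtp (l : List (Fin 3)) : ℕ := l.length + l.count 2

/-- Delete the first letter different from `θ` (= `2`). -/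
def dropFirstNonTheta : List (Fin 3) → List (Fin 3)
  | [] => []
  | a :: t => if a = 2 then a :: dropFirstNonTheta t else t

/-- `(ab)'`: delete the last two non-`θ` letters of a word (preserving `wt_θ`). -/
def prune (l : List (Fin 3)) : List (Fin 3) :=
  (dropFirstNonTheta (dropFirstNonTheta l.reverse)).reverse

/-- `φ₁` on monomials: the identity in weights `≤ N` and zero otherwise. -/
def phi1w (N : ℕ) (l : List (Fin 3)) : R0dual :=
  if wtp l ≤ N then mono l else 0

open Classical in
/-- `φ₂` on pairs of monomials: `(ab)'·θ` when `ab ≠ 0`, `wt₊(ab) > N`,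
`wt₊(a) ≤ N` and `wt₊(b) ≤ N`; zero otherwise. -/
def phi2w (N : ℕ) (a b : List (Fin 3)) : R0dual :=
  if mono (a ++ b) ≠ 0 ∧ N < wtp (a ++ b) ∧ wtp a ≤ N ∧ wtp b ≤ N then
    mono (prune (a ++ b) ++ [2])
  else 0

-- basics
lemma mono_nil : mono [] = 1 := rfl
lemma mono_cons (x : Fin 3) (l : List (Fin 3)) : mono (x :: l) = gen x * mono l := rfl
lemma mono_append (x y : List (Fin 3)) : mono (x ++ y) = mono x * mono y := by
  simp [mono, List.prod_append]
lemma mono_single (x : Fin 3) : mono [x] = gen x := by simp [mono]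
lemma wtp_append (x y : List (Fin 3)) : wtp (x ++ y) = wtp x + wtp y := by
  simp [wtp]; omega

lemma gen_mul_self (x : Fin 3) : gen x * gen x = 0 := by
  have h : ∀ i : Fin 3, relK (FreeAlgebra.ι (ZMod 2) i * FreeAlgebra.ι (ZMod 2) i) 0 := by
    intro i; fin_cases i
    · exact relK.wsq
    · exact relK.zsq
    · exact relK.thsq
  have := RingQuot.mkRingHom_rel (h x)
  simpa [gen, map_mul] using this

lemma gen_theta_comm (x : Fin 3) : gen x * gen 2 = gen 2 * gen x := by
  fin_cases x
  · simpa [gen, map_mul] using RingQuot.mkRingHom_rel relK.wth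
  · simpa [gen, map_mul] using RingQuot.mkRingHom_rel relK.zth
  · rfl

lemma mono_theta_comm (l : List (Fin 3)) : mono l * gen 2 = gen 2 * mono l := by
  induction l with
  | nil => simp [mono_nil]
  | cons x t ih => rw [mono_cons, mul_assoc, ih, ← mul_assoc, gen_theta_comm, mul_assoc]

lemma mono_pow_theta (l : List (Fin 3)) :
    mono l = gen 2 ^ (l.count 2) * mono (l.filter (fun x => !(x == 2))) := by
  induction l with
  | nil => simp [mono_nil]
  | cons x t ih =>
    by_cases hx : x = 2
    · subst hx
      rw [mono_cons, ih]
      have hpow : gen 2 * gen 2 ^ (t.count 2) = gen 2 ^ (t.count 2) * gen 2 := by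
        induction (t.count 2) with
        | zero => simp
        | succ n ihn => rw [pow_succ, ← mul_assoc, ihn, mul_assoc]
      simp only [List.count_cons, if_pos rfl, List.filter_cons,
        show ((2:Fin 3) == 2) = true from rfl, Bool.not_true, Bool.false_eq_true, if_false,
        pow_succ, if_true]
      rw [← mul_assoc, hpow]
    · rw [mono_cons, ih]
      have hmul : gen x * gen 2 ^ (t.count 2) = gen 2 ^ (t.count 2) * gen x := by
        induction (t.count 2) with
        | zero => simp
        | succ n ihn => rw [pow_succ, ← mul_assoc, ihn, mul_assoc, gen_theta_comm, ← mul_assoc]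
      have hb : (x == 2) = false := by simp [hx]
      rw [List.count_cons, List.filter_cons]
      simp only [hb, Bool.not_false, if_true, if_false, mono_cons]
      rw [← mul_assoc, hmul, mul_assoc]
      simp [hx]

lemma mono_zero_of_two_theta (l : List (Fin 3)) (h : 2 ≤ l.count 2) : mono l = 0 := by
  rw [mono_pow_theta]
  obtain ⟨k, hk⟩ : ∃ k, l.count 2 = k + 2 := ⟨l.count 2 - 2, by omega⟩
  rw [hk, pow_add, pow_two, gen_mul_self, mul_zero, zero_mul]

lemma mono_zero_of_not_chain (l : List (Fin 3)) (h : ¬ l.Chain' (· ≠ ·)) : mono l = 0 := by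
  induction l with
  | nil => exact absurd List.isChain_nil h
  | cons x t ih =>
    cases t with
    | nil => exact absurd (List.isChain_singleton x) h
    | cons y s =>
      simp only [List.Chain', List.isChain_cons_cons] at h
      push_neg at h
      by_cases hxy : x = y
      · subst hxy
        rw [mono_cons, mono_cons, ← mul_assoc, gen_mul_self, zero_mul]
      · rw [mono_cons, ih (fun hc => h hxy hc), mul_zero]

lemma mono_repeat_zero (u v : List (Fin 3)) (x : Fin 3) :
    mono (u ++ x :: x :: v) = 0 := by
  rw [mono_append, mono_cons, mono_cons, ← mul_assoc, mul_assoc (mono u),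
    ← mul_assoc (gen x), gen_mul_self, zero_mul, mul_zero]

-- module char 2
lemma addself {M : Type*} [AddCommMonoid M] [Module (ZMod 2) M] (x : M) : x + x = 0 := by
  have : ((2 : ZMod 2) : ZMod 2) • x = x + x := two_smul _ x
  rw [show (2 : ZMod 2) = 0 from rfl, zero_smul] at this
  exact this.symm

lemma eq_zero_of_self_eq_add_self {M : Type*} [AddCommMonoid M] [Module (ZMod 2) M]
    {x : M} (h : x = x + x) : x = 0 := by rw [h, addself]

-- prune
lemma count2_dropFNT (l : List (Fin 3)) :
    (dropFirstNonTheta l).count 2 = l.count 2 := by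
  induction l with
  | nil => rfl
  | cons a t ih =>
    by_cases ha : a = 2
    · subst ha; simp [dropFirstNonTheta, List.count_cons, ih]
    · simp [dropFirstNonTheta, ha, List.count_cons]

lemma count_reverse' (l : List (Fin 3)) (x : Fin 3) : l.reverse.count x = l.count x :=
  (List.reverse_perm l).count_eq x

lemma count2_prune (l : List (Fin 3)) : (prune l).count 2 = l.count 2 := by
  rw [prune, count_reverse', count2_dropFNT, count2_dropFNT, count_reverse']

lemma dropFNT_thfree (l : List (Fin 3)) (h : (2 : Fin 3) ∉ l) :
    dropFirstNonTheta l = l.tail := by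
  cases l with
  | nil => rfl
  | cons a t =>
    have : a ≠ 2 := fun hc => h (by simp [hc])
    simp [dropFirstNonTheta, this]

lemma prune_thfree (l : List (Fin 3)) (h : (2 : Fin 3) ∉ l) :
    prune l = l.dropLast.dropLast := by
  have h1 : (2 : Fin 3) ∉ l.reverse := by simpa using h
  rw [prune, dropFNT_thfree _ h1, List.tail_reverse]
  have h2 : (2 : Fin 3) ∉ l.dropLast.reverse := by
    simp only [List.mem_reverse]
    exact fun hc => h (List.dropLast_sublist l |>.mem hc)
  rw [dropFNT_thfree _ h2, List.tail_reverse, List.reverse_reverse]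

-- wordFA
lemma wordFA_nil : wordFA [] = 1 := rfl
lemma wordFA_cons (x : Fin 3) (l : List (Fin 3)) :
    wordFA (x :: l) = FreeAlgebra.ι (ZMod 2) x * wordFA l := rfl
lemma wordFA_append (x y : List (Fin 3)) : wordFA (x ++ y) = wordFA x * wordFA y := by
  simp [wordFA, List.prod_append]

-- substitution list for D
def subs : List (Fin 3) → List (List (Fin 3))
  | [] => []
  | x :: t =>
      (if x = 2 then [0 :: 1 :: t, 1 :: 0 :: t] else []) ++ (subs t).map (x :: ·)

lemma subs_thfree (l : List (Fin 3)) (h : (2 : Fin 3) ∉ l) : subs l = [] := by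
  induction l with
  | nil => rfl
  | cons a t ih =>
    have ha : a ≠ 2 := fun hc => h (by simp [hc])
    have ht : (2 : Fin 3) ∉ t := fun hc => h (by simp [hc])
    simp [subs, ha, ih ht]

lemma subs_mem (l : List (Fin 3)) (m : List (Fin 3)) (hm : m ∈ subs l) :
    m.count 2 + 1 = l.count 2 ∧ m.length = l.length + 1 := by
  induction l generalizing m with
  | nil => simp [subs] at hm
  | cons a t ih =>
    simp only [subs] at hm
    rw [List.mem_append] at hm
    rcases hm with hm | hm
    · by_cases ha : a = 2
      · subst ha
        simp at hm
        rcases hm with rfl | rfl <;> (constructor <;> simp [List.count_cons])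
      · simp [ha] at hm
    · rw [List.mem_map] at hm
      obtain ⟨m', hm', rfl⟩ := hm
      obtain ⟨h1, h2⟩ := ih m' hm'
      constructor
      · simp [List.count_cons]; omega
      · simp [h2]

lemma subs_wtp (l : List (Fin 3)) (m : List (Fin 3)) (hm : m ∈ subs l) : wtp m = wtp l := by
  obtain ⟨h1, h2⟩ := subs_mem l m hm
  simp [wtp]; omega

lemma subs_split (p q : List (Fin 3)) (hp : (2 : Fin 3) ∉ p) (hq : (2 : Fin 3) ∉ q) :
    subs (p ++ 2 :: q) = [p ++ 0 :: 1 :: q, p ++ 1 :: 0 :: q] := by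
  induction p with
  | nil => simp [subs, subs_thfree q hq]
  | cons a t ih =>
    have ha : a ≠ 2 := fun hc => hp (by simp [hc])
    have ht : (2 : Fin 3) ∉ t := fun hc => hp (by simp [hc])
    simp [subs, ha, ih ht]

-- model
set_option synthInstance.maxHeartbeats 1000000

abbrev MA := Matrix (Fin 2) (Fin 2) (DualNumber (ZMod 2))

def mf : Fin 3 → MA
  | 0 => Matrix.single 0 1 1
  | 1 => Matrix.single 1 0 1
  | 2 => (DualNumber.eps : DualNumber (ZMod 2)) • (1 : MA)

def rhoFA : FA →ₐ[ZMod 2] MA := FreeAlgebra.lift _ mf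

lemma rhoFA_rel : ∀ ⦃x y⦄, relK x y → rhoFA x = rhoFA y := by
  intro x y h
  cases h <;>
    simp only [rhoFA, map_mul, map_zero, FreeAlgebra.lift_ι_apply, mf]
  · exact Matrix.single_mul_single_of_ne (1 : DualNumber (ZMod 2)) (0 : Fin 2) (1 : Fin 2) 0 (by decide) 1
  · exact Matrix.single_mul_single_of_ne (1 : DualNumber (ZMod 2)) (1 : Fin 2) (0 : Fin 2) 1 (by decide) 1
  · rw [mul_smul_comm, smul_mul_assoc, mul_one, one_mul]
  · rw [mul_smul_comm, smul_mul_assoc, mul_one, one_mul]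
  · rw [mul_smul_comm, mul_one, smul_smul, DualNumber.eps_mul_eps, zero_smul]

def rho : R0dual →ₐ[ZMod 2] MA := RingQuot.liftAlgHom (ZMod 2) ⟨rhoFA, rhoFA_rel⟩

lemma rho_gen (i : Fin 3) : rho (gen i) = mf i := by
  have h1 : gen i = RingQuot.mkAlgHom (ZMod 2) relK (FreeAlgebra.ι (ZMod 2) i) := by
    rw [gen, ← RingQuot.mkAlgHom_coe (ZMod 2) relK]; rfl
  rw [h1, rho, RingQuot.liftAlgHom_mkAlgHom_apply, rhoFA, FreeAlgebra.lift_ι_apply]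

def ix : Fin 3 → Fin 2
  | 0 => 0
  | 1 => 1
  | 2 => 0

def fl2 : Fin 2 → Fin 2
  | 0 => 1
  | 1 => 0

lemma mf_eq (x : Fin 3) (hx : x ≠ 2) :
    mf x = Matrix.single (ix x) (fl2 (ix x)) 1 := by
  match x with
  | 0 => rfl
  | 1 => rfl
  | 2 => exact absurd rfl hx

lemma fl2_ix (x y : Fin 3) (hx : x ≠ 2) (hy : y ≠ 2) (hxy : x ≠ y) :
    fl2 (ix x) = ix y := by
  revert hx hy hxy
  fin_cases x <;> fin_cases y <;> decide

def lastL : List (Fin 3) → Fin 3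
  | [] => 0
  | [a] => a
  | _ :: b :: t => lastL (b :: t)

lemma lastL_cons_cons (a b : Fin 3) (t : List (Fin 3)) :
    lastL (a :: b :: t) = lastL (b :: t) := rfl

lemma rho_mono (l : List (Fin 3)) (hne : l ≠ []) (hth : (2 : Fin 3) ∉ l)
    (hch : l.Chain' (· ≠ ·)) :
    rho (mono l) = Matrix.single (ix l.headI) (fl2 (ix (lastL l))) 1 := by
  induction l with
  | nil => exact absurd rfl hne
  | cons x t ih =>
    have hx : x ≠ 2 := fun hc => hth (by simp [hc])
    cases t with
    | nil =>
      simp only [mono_cons, mono_nil, mul_one, map_mul]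
      rw [rho_gen, mf_eq x hx]
      rfl
    | cons y s =>
      have hy : y ≠ 2 := fun hc => hth (by simp [hc])
      have hxy : x ≠ y := (List.isChain_cons_cons.mp hch).1
      have key := ih (List.cons_ne_nil y s) (fun hc => hth (List.mem_cons_of_mem x hc))
        (List.isChain_cons_cons.mp hch).2
      rw [mono_cons, map_mul, rho_gen, key, mf_eq x hx, fl2_ix x y hx hy hxy]
      show _ = Matrix.single (ix x) (fl2 (ix (lastL (x :: y :: s)))) 1
      rw [lastL_cons_cons]
      have : List.headI (y :: s) = y := rfl
      rw [this, Matrix.single_mul_single_same, one_mul]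

lemma mono_ne_zero_alt (l : List (Fin 3)) (hth : (2 : Fin 3) ∉ l)
    (hch : l.Chain' (· ≠ ·)) : mono l ≠ 0 := by
  cases l with
  | nil =>
    intro h
    have h1 : (1 : MA) = 0 := by
      have := congrArg rho h
      simpa [mono_nil] using this
    have h2 : (1 : DualNumber (ZMod 2)) = 0 := by
      have := congrFun (congrFun h1 0) 0
      simpa [Matrix.one_apply] using this
    have h3 : (1 : ZMod 2) = 0 := by simpa using congrArg TrivSqZeroExt.fst h2
    exact one_ne_zero h3
  | cons x t =>
    intro h
    have h2 := congrArg rho h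
    rw [rho_mono _ (List.cons_ne_nil x t) hth hch, map_zero] at h2
    have h3 := congrFun (congrFun h2 (ix (x :: t).headI)) (fl2 (ix (lastL (x :: t))))
    rw [Matrix.single_apply_same] at h3
    have h5 : (1 : DualNumber (ZMod 2)) = 0 := by simpa using h3
    have h4 : (1 : ZMod 2) = 0 := by simpa using congrArg TrivSqZeroExt.fst h5
    exact one_ne_zero h4

-- uniqueness of alternating words
lemma letters_eq : ∀ x u v : Fin 3, x ≠ 2 → u ≠ 2 → v ≠ 2 → x ≠ u → x ≠ v → u = v := by
  intro x u v
  fin_cases x <;> fin_cases u <;> fin_cases v <;> decide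

lemma alt_unique (l : List (Fin 3)) : ∀ m : List (Fin 3), (2 : Fin 3) ∉ l → (2 : Fin 3) ∉ m →
    l.Chain' (· ≠ ·) → m.Chain' (· ≠ ·) → l.length = m.length → l.head? = m.head? → l = m := by
  induction l with
  | nil =>
    intro m _ _ _ _ hlen _
    cases m with
    | nil => rfl
    | cons y m' => simp at hlen
  | cons x l' ih =>
    intro m hlth hmth hlch hmch hlen hhead
    cases m with
    | nil => simp at hlen
    | cons y m' =>
      simp only [List.head?_cons, Option.some.injEq] at hhead
      subst hhead
      have hx : x ≠ 2 := fun hc => hlth (by simp [hc])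
      congr 1
      apply ih m' (fun hc => hlth (List.mem_cons_of_mem x hc))
        (fun hc => hmth (List.mem_cons_of_mem x hc))
        (List.isChain_cons.mp hlch).2 (List.isChain_cons.mp hmch).2
        (by simpa using hlen)
      cases l' with
      | nil =>
        cases m' with
        | nil => rfl
        | cons v m'' => simp at hlen
      | cons u l'' =>
        cases m' with
        | nil => simp at hlen
        | cons v m'' =>
          have hu : u ≠ 2 := fun hc => hlth (by simp [hc])
          have hv : v ≠ 2 := fun hc => hmth (by simp [hc])
          have hxu : x ≠ u := (List.isChain_cons_cons.mp hlch).1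
          have hxv : x ≠ v := (List.isChain_cons_cons.mp hmch).1
          rw [List.head?_cons, List.head?_cons, letters_eq x u v hx hu hv hxu hxv]

lemma head?_dropLast (l : List (Fin 3)) (h : 2 ≤ l.length) :
    l.dropLast.head? = l.head? := by
  match l, h with
  | a :: b :: t, _ => simp [List.dropLast]

lemma exists_append_two (l : List (Fin 3)) (h : 2 ≤ l.length) :
    ∃ c x y, l = c ++ [x, y] := by
  match hr : l.reverse, h with
  | [], _ => simp_all
  | [y], _ => rw [← l.reverse_reverse, hr] at h; simp at h
  | y :: x :: c, _ =>
    refine ⟨c.reverse, x, y, ?_⟩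
    rw [← l.reverse_reverse, hr]
    simp

-- derivation lemmas
section Deriv
variable {mu : R0dual →ₗ[ZMod 2] R0dual}
variable (h0 : mu (gen 0) = 0) (h1 : mu (gen 1) = 0)
  (h2 : mu (gen 2) = gen 0 * gen 1 + gen 1 * gen 0)
  (hL : ∀ a b, mu (a * b) = mu a * b + a * mu b)

include hL in
lemma mu_one : mu 1 = 0 := eq_zero_of_self_eq_add_self (by simpa using hL 1 1)

include h0 h1 in
lemma mu_gen_ne2 (x : Fin 3) (hx : x ≠ 2) : mu (gen x) = 0 := by
  match x with
  | 0 => exact h0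
  | 1 => exact h1
  | 2 => exact absurd rfl hx

include h0 h1 hL in
lemma mu_mono_thfree (l : List (Fin 3)) (h : (2 : Fin 3) ∉ l) : mu (mono l) = 0 := by
  induction l with
  | nil => rw [mono_nil]; exact mu_one hL
  | cons x t ih =>
    have hx : x ≠ 2 := fun hc => h (by simp [hc])
    rw [mono_cons, hL, mu_gen_ne2 h0 h1 x hx, zero_mul,
      ih (fun hc => h (List.mem_cons_of_mem x hc)), mul_zero, add_zero]

include h0 h1 h2 hL in
lemma mu_mono_theta (l : List (Fin 3)) (h : (2 : Fin 3) ∉ l) :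
    mu (mono (l ++ [2])) = mono (l ++ [0, 1]) + mono (l ++ [1, 0]) := by
  have e1 : mono [(0 : Fin 3), 1] = gen 0 * gen 1 := by simp [mono]
  have e2 : mono [(1 : Fin 3), 0] = gen 1 * gen 0 := by simp [mono]
  rw [mono_append, mono_single, hL, mu_mono_thfree h0 h1 hL l h, zero_mul, zero_add, h2,
    mul_add, mono_append, mono_append, e1, e2]

end Deriv

section DDeriv
variable {Dd : FA →ₗ[ZMod 2] FA}
variable (g0 : Dd (FreeAlgebra.ι (ZMod 2) 0) = 0) (g1 : Dd (FreeAlgebra.ι (ZMod 2) 1) = 0)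
  (g2 : Dd (FreeAlgebra.ι (ZMod 2) 2) =
    FreeAlgebra.ι (ZMod 2) 0 * FreeAlgebra.ι (ZMod 2) 1 +
      FreeAlgebra.ι (ZMod 2) 1 * FreeAlgebra.ι (ZMod 2) 0)
  (gL : ∀ x y : FA, Dd (x * y) = Dd x * y + x * Dd y)

include gL in
lemma D_one : Dd 1 = 0 := eq_zero_of_self_eq_add_self (by simpa using gL 1 1)

include g0 g1 in
lemma D_gen_ne2 (x : Fin 3) (hx : x ≠ 2) : Dd (FreeAlgebra.ι (ZMod 2) x) = 0 := by
  match x with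
  | 0 => exact g0
  | 1 => exact g1
  | 2 => exact absurd rfl hx

lemma mul_sum_words (x : Fin 3) (L : List (List (Fin 3))) :
    FreeAlgebra.ι (ZMod 2) x * (L.map wordFA).sum = (L.map (fun m => wordFA (x :: m))).sum := by
  induction L with
  | nil => simp
  | cons m L' ih => simp only [List.map_cons, List.sum_cons, mul_add, ih, wordFA_cons]

include g0 g1 g2 gL in
lemma D_wordFA (l : List (Fin 3)) : Dd (wordFA l) = ((subs l).map wordFA).sum := by
  induction l with
  | nil => simpa [wordFA_nil, subs] using D_one gL
  | cons x t ih =>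
    rw [wordFA_cons, gL, ih, mul_sum_words]
    by_cases hx : x = 2
    · subst hx
      rw [g2, subs]
      simp only [if_pos rfl, List.map_append, List.sum_append, List.map_map]
      rw [add_mul]
      have e1 : FreeAlgebra.ι (ZMod 2) 0 * FreeAlgebra.ι (ZMod 2) 1 * wordFA t
          = wordFA (0 :: 1 :: t) := by rw [wordFA_cons, wordFA_cons, mul_assoc]
      have e2 : FreeAlgebra.ι (ZMod 2) 1 * FreeAlgebra.ι (ZMod 2) 0 * wordFA t
          = wordFA (1 :: 0 :: t) := by rw [wordFA_cons, wordFA_cons, mul_assoc]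
      rw [e1, e2]
      simp [Function.comp_def, add_assoc]
    · rw [D_gen_ne2 g0 g1 x hx, zero_mul, zero_add, subs]
      simp [hx, Function.comp_def]

end DDeriv

lemma phi2w_zero_of_theta (N : ℕ) (a b : List (Fin 3)) (h : 1 ≤ (a ++ b).count 2) :
    phi2w N a b = 0 := by
  rw [phi2w]
  split_ifs with hc
  · apply mono_zero_of_two_theta
    rw [List.count_append, count2_prune]
    have hc : List.count (2 : Fin 3) [2] = 1 := rfl
    omega
  · rfl

lemma wtp_le_left (a b : List (Fin 3)) : wtp a ≤ wtp (a ++ b) := by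
  rw [wtp_append]; omega
lemma wtp_le_right (a b : List (Fin 3)) : wtp b ≤ wtp (a ++ b) := by
  rw [wtp_append]; omega

lemma phi1_part (N : ℕ) (a b : List (Fin 3)) :
    phi1w N (a ++ b) + phi1w N a * phi1w N b =
      if wtp (a ++ b) ≤ N then 0
      else if wtp a ≤ N ∧ wtp b ≤ N then mono (a ++ b) else 0 := by
  rw [phi1w, phi1w, phi1w]
  by_cases h : wtp (a ++ b) ≤ N
  · have ha : wtp a ≤ N := le_trans (wtp_le_left a b) h
    have hb : wtp b ≤ N := le_trans (wtp_le_right a b) h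
    rw [if_pos h, if_pos ha, if_pos hb, if_pos h, ← mono_append, addself]
  · rw [if_neg h, if_neg h, zero_add]
    by_cases hab : wtp a ≤ N ∧ wtp b ≤ N
    · rw [if_pos hab.1, if_pos hab.2, if_pos hab, mono_append]
    · rw [if_neg hab]
      rcases not_and_or.mp hab with ha | hb
      · rw [if_neg ha, zero_mul]
      · rw [if_neg hb, mul_zero]

-- flip letter
def flp : Fin 3 → Fin 3
  | 0 => 1
  | 1 => 0
  | 2 => 0

lemma flp_ne2 (x : Fin 3) : flp x ≠ 2 := by fin_cases x <;> decide
lemma flp_ne (x : Fin 3) (hx : x ≠ 2) : flp x ≠ x := by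
  revert hx; fin_cases x <;> decide
lemma flp_flp (x : Fin 3) (hx : x ≠ 2) : flp (flp x) = x := by
  revert hx; fin_cases x <;> decide

lemma letters4 : ∀ u x y v : Fin 3, u ≠ 2 → x ≠ 2 → y ≠ 2 → v ≠ 2 →
    u ≠ x → x ≠ y → y ≠ v → u ≠ v := by
  intro u x y v hu hx hy hv h1 h2 h3
  have l1 := u.isLt
  have l2 := x.isLt
  have l3 := y.isLt
  have l4 := v.isLt
  have h2v : ((2 : Fin 3) : ℕ) = 2 := rfl
  simp only [Ne, Fin.ext_iff] at *
  omega

lemma chain_of_insert (p q : List (Fin 3)) (x y : Fin 3) (hp : (2:Fin 3) ∉ p)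
    (hq : (2:Fin 3) ∉ q) (hx : x ≠ 2) (hy : y ≠ 2)
    (h : (p ++ x :: y :: q).Chain' (· ≠ ·)) : (p ++ q).Chain' (· ≠ ·) := by
  simp only [List.Chain'] at h ⊢
  rw [List.isChain_append] at h
  obtain ⟨hcp, hcxy, hjun⟩ := h
  have hxy : x ≠ y := (List.isChain_cons_cons.mp hcxy).1
  have hyq : ∀ v ∈ q.head?, y ≠ v := (List.isChain_cons.mp (List.isChain_cons_cons.mp hcxy).2).1
  have hcq : q.Chain' (· ≠ ·) := (List.isChain_cons.mp (List.isChain_cons_cons.mp hcxy).2).2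
  rw [List.isChain_append]
  refine ⟨hcp, hcq, ?_⟩
  intro u hu v hv
  have hu2 : u ≠ 2 := fun hc => hp (hc ▸ List.mem_of_mem_getLast? hu)
  have hv2 : v ≠ 2 := fun hc => hq (hc ▸ List.mem_of_mem_head? hv)
  have hux : u ≠ x := hjun u hu x rfl
  exact letters4 u x y v hu2 hx hy hv2 hux hxy (hyq v hv)

lemma head?_append_left (p l : List (Fin 3)) (hp : p ≠ []) :
    (p ++ l).head? = p.head? := by
  cases p with
  | nil => exact absurd rfl hp
  | cons a t => rfl

lemma thfree_ins (p q : List (Fin 3)) (u v : Fin 3) (hp : (2:Fin 3) ∉ p)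
    (hq : (2:Fin 3) ∉ q) (hu : u ≠ 2) (hv : v ≠ 2) :
    (2:Fin 3) ∉ p ++ u :: v :: q := by
  intro hc
  rcases List.mem_append.mp hc with h | h
  · exact hp h
  · simp only [List.mem_cons] at h
    rcases h with h | h | h
    · exact hu h.symm
    · exact hv h.symm
    · exact hq h

lemma finish_core (p q : List (Fin 3)) (u v : Fin 3) (hp : (2:Fin 3) ∉ p)
    (hq : (2:Fin 3) ∉ q) (hch : (p ++ q).Chain' (· ≠ ·)) (hlen : 3 ≤ p.length + q.length)
    (hu : u ≠ 2) (hv : v ≠ 2)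
    (hw1chain : (p ++ u :: v :: q).Chain' (· ≠ ·))
    (hhead : (p ++ u :: v :: q).head? = (p ++ q).head?) :
    mono (prune (p ++ u :: v :: q) ++ [2]) = gen 2 * mono (p ++ q) := by
  have hw1th : (2:Fin 3) ∉ p ++ u :: v :: q := thfree_ins p q u v hp hq hu hv
  have hw1len : (p ++ u :: v :: q).length = p.length + q.length + 2 := by
    simp only [List.length_append, List.length_cons]; omega
  have hsub : List.Sublist (p ++ u :: v :: q).dropLast.dropLast (p ++ u :: v :: q) :=
    (List.dropLast_sublist _).trans (List.dropLast_sublist _)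
  have hpre : List.IsPrefix (p ++ u :: v :: q).dropLast.dropLast (p ++ u :: v :: q) :=
    (List.dropLast_prefix _).trans (List.dropLast_prefix _)
  have hdl : (p ++ u :: v :: q).dropLast.dropLast = p ++ q := by
    apply alt_unique
    · exact fun hc => hw1th (hsub.subset hc)
    · exact fun hc => (List.mem_append.mp hc).elim hp hq
    · exact hw1chain.prefix hpre
    · exact hch
    · simp only [List.length_dropLast, hw1len, List.length_append]; omega
    · rw [head?_dropLast _ (by simp only [List.length_dropLast, hw1len]; omega),
        head?_dropLast _ (by omega), hhead]
  rw [prune_thfree _ hw1th, hdl, mono_append, mono_single, mono_theta_comm _]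

open Classical in
lemma core (p q : List (Fin 3)) (hp : (2:Fin 3) ∉ p) (hq : (2:Fin 3) ∉ q)
    (hlen : 3 ≤ p.length + q.length) :
    (if mono (p ++ 0 :: 1 :: q) = 0 then 0 else mono (prune (p ++ 0 :: 1 :: q) ++ [2])) +
      (if mono (p ++ 1 :: 0 :: q) = 0 then 0 else mono (prune (p ++ 1 :: 0 :: q) ++ [2]))
      = gen 2 * mono (p ++ q) := by
  by_cases hch : (p ++ q).Chain' (· ≠ ·)
  case neg =>
    have hz : mono (p ++ q) = 0 := mono_zero_of_not_chain _ hch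
    have h1 : mono (p ++ 0 :: 1 :: q) = 0 := mono_zero_of_not_chain _
      (fun hc => hch (chain_of_insert p q 0 1 hp hq (by decide) (by decide) hc))
    have h2 : mono (p ++ 1 :: 0 :: q) = 0 := mono_zero_of_not_chain _
      (fun hc => hch (chain_of_insert p q 1 0 hp hq (by decide) (by decide) hc))
    rw [if_pos h1, if_pos h2, hz, mul_zero, add_zero]
  case pos =>
    obtain ⟨x₀, hx2, hw1chain, hw2zero, hhead⟩ :
        ∃ x₀ : Fin 3, x₀ ≠ 2 ∧ (p ++ x₀ :: flp x₀ :: q).Chain' (· ≠ ·) ∧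
          mono (p ++ flp x₀ :: x₀ :: q) = 0 ∧
          (p ++ x₀ :: flp x₀ :: q).head? = (p ++ q).head? := by
      rcases List.eq_nil_or_concat' p with rfl | ⟨p', d, rfl⟩
      · -- p empty
        cases q with
        | nil => simp at hlen
        | cons c q' =>
          have hc2 : c ≠ 2 := fun h => hq (by simp [h])
          refine ⟨c, hc2, ?_, ?_, rfl⟩
          · refine List.isChain_cons_cons.mpr ⟨(flp_ne c hc2).symm, ?_⟩
            exact List.isChain_cons_cons.mpr ⟨flp_ne c hc2, hch⟩
          · have : (([] : List (Fin 3)) ++ flp c :: c :: c :: q')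
                = [flp c] ++ c :: c :: q' := by simp
            rw [this]
            exact mono_repeat_zero [flp c] q' c
      · -- p = p' ++ [d]
        have hd2 : d ≠ 2 := fun h => hp (by simp [h])
        have hpne : p' ++ [d] ≠ [] := by simp
        refine ⟨flp d, flp_ne2 d, ?_, ?_,
          (head?_append_left _ (flp d :: flp (flp d) :: q) hpne).trans
            (head?_append_left _ q hpne).symm⟩
        · rw [flp_flp d hd2]
          simp only [List.Chain'] at hch ⊢
          rw [List.isChain_append] at hch ⊢
          obtain ⟨hcp, hcq, hjun⟩ := hch
          refine ⟨hcp, ?_, ?_⟩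
          · refine List.isChain_cons_cons.mpr ⟨(flp_ne d hd2), ?_⟩
            refine List.isChain_cons.mpr ⟨?_, hcq⟩
            intro v hv
            exact hjun d (by rw [List.getLast?_concat]; rfl) v hv
          · intro u hu v hv
            rw [List.getLast?_concat] at hu
            rw [List.head?_cons] at hv
            rw [Option.mem_def, Option.some.injEq] at hu hv
            rw [← hu, ← hv]
            exact (flp_ne d hd2).symm
        · rw [flp_flp d hd2]
          have : (p' ++ [d]) ++ d :: flp d :: q = p' ++ d :: d :: (flp d :: q) := by simp
          rw [this]
          exact mono_repeat_zero p' (flp d :: q) d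
    have hx01 : x₀ = 0 ∨ x₀ = 1 := by
      have h1 := x₀.isLt
      have h2 : x₀.val ≠ 2 := fun hc => hx2 (Fin.ext (by rw [hc]; rfl))
      have hval : x₀.val = 0 ∨ x₀.val = 1 := by omega
      rcases hval with h | h
      · left; exact Fin.ext (by rw [h]; rfl)
      · right; exact Fin.ext (by rw [h]; rfl)
    rcases hx01 with rfl | rfl
    · rw [show flp 0 = 1 from rfl] at hw1chain hw2zero hhead
      rw [if_neg (mono_ne_zero_alt _ (thfree_ins p q 0 1 hp hq (by decide) (by decide))
            hw1chain),
        if_pos hw2zero, add_zero]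
      exact finish_core p q 0 1 hp hq hch hlen (by decide) (by decide) hw1chain hhead
    · rw [show flp 1 = 0 from rfl] at hw1chain hw2zero hhead
      rw [if_pos hw2zero,
        if_neg (mono_ne_zero_alt _ (thfree_ins p q 1 0 hp hq (by decide) (by decide))
            hw1chain),
        zero_add]
      exact finish_core p q 1 0 hp hq hch hlen (by decide) (by decide) hw1chain hhead

lemma pair01 (x y : Fin 3) (hx : x ≠ 2) (hy : y ≠ 2) (hxy : x ≠ y) :
    (x = 0 ∧ y = 1) ∨ (x = 1 ∧ y = 0) := by
  revert hx hy hxy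
  fin_cases x <;> fin_cases y <;> decide

lemma force1 (g : Fin 3) (h2 : g ≠ 2) (h0 : g ≠ 0) : g = 1 := by
  revert h2 h0; fin_cases g <;> decide

lemma force0 (g : Fin 3) (h2 : g ≠ 2) (h1 : g ≠ 1) : g = 0 := by
  revert h2 h1; fin_cases g <;> decide

lemma mono_theta_mid (p r : List (Fin 3)) : mono (p ++ 2 :: r) = gen 2 * mono (p ++ r) := by
  rw [mono_append, mono_cons, ← mul_assoc, mono_theta_comm, mul_assoc, ← mono_append]

open Classical in
lemma phi2w_as_if (N : ℕ) (a b : List (Fin 3)) (h1 : N < wtp (a ++ b)) (h2 : wtp a ≤ N)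
    (h3 : wtp b ≤ N) :
    phi2w N a b = if mono (a ++ b) = 0 then 0 else mono (prune (a ++ b) ++ [2]) := by
  rw [phi2w]
  by_cases hz : mono (a ++ b) = 0
  · rw [if_neg (fun hc => hc.1 hz), if_pos hz]
  · rw [if_pos ⟨hz, h1, h2, h3⟩, if_neg hz]

lemma phi2w_zero_of_wtp_le (N : ℕ) (a b : List (Fin 3)) (h : wtp (a ++ b) ≤ N) :
    phi2w N a b = 0 := by
  rw [phi2w]
  exact if_neg (fun hc => absurd hc.2.1 (by omega))

lemma phi2w_zero_of_sides (N : ℕ) (a b : List (Fin 3)) (h : ¬(wtp a ≤ N ∧ wtp b ≤ N)) :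
    phi2w N a b = 0 := by
  rw [phi2w]
  exact if_neg (fun hc => h ⟨hc.2.2.1, hc.2.2.2⟩)

lemma mu_phi_match (c : List (Fin 3)) (x y : Fin 3) (hth : (2:Fin 3) ∉ c ++ [x, y])
    (hch : (c ++ [x, y]).Chain' (· ≠ ·)) (hcne : c ≠ []) :
    mono (c ++ [0, 1]) + mono (c ++ [1, 0]) = mono (c ++ [x, y]) := by
  have hx : x ≠ 2 := fun h => hth (by simp [h])
  have hy : y ≠ 2 := fun h => hth (by simp [h])
  obtain ⟨hc1, hc2, hjun⟩ := List.isChain_append.mp hch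
  have hxy : x ≠ y := (List.isChain_cons_cons.mp hc2).1
  have hg : c.getLast hcne ∈ c.getLast? := by rw [List.getLast?_eq_getLast hcne]; rfl
  have hgx : c.getLast hcne ≠ x := hjun _ hg x rfl
  have hg2 : c.getLast hcne ≠ 2 := fun h => hth (List.mem_append_left _ (h ▸ List.getLast_mem hcne))
  have hsplit : c.dropLast ++ [c.getLast hcne] = c := List.dropLast_append_getLast hcne
  rcases pair01 x y hx hy hxy with ⟨rfl, rfl⟩ | ⟨rfl, rfl⟩
  · have hg1 : c.getLast hcne = 1 := force1 _ hg2 hgx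
    have he : c ++ [1, 0] = c.dropLast ++ 1 :: 1 :: [0] := by
      conv_lhs => rw [← hsplit, hg1]
      simp
    rw [he, mono_repeat_zero, add_zero]
  · have hg0 : c.getLast hcne = 0 := force0 _ hg2 hgx
    have he : c ++ [0, 1] = c.dropLast ++ 0 :: 0 :: [1] := by
      conv_lhs => rw [← hsplit, hg0]
      simp
    rw [he, mono_repeat_zero, zero_add]

/-- The pair `(φ₁, φ₂, 0, 0, …)` satisfies the two-input `A∞`-morphism relation:
for all monomials `a, b` of `R₀^!`,
`φ₁(ab) + φ₁(a)φ₁(b) + μ₁(φ₂(a,b)) + φ₂(μ₁(a), b) + φ₂(a, μ₁(b)) = 0`,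
where `μ₁` is the differential (with `μ₁(θ) = wz + zw`, extended by the Leibniz
rule) and `φ₂` is extended bilinearly (via linear maps `P·, Q·` extending `φ₂` in
its first, resp. second, argument over the word basis of the free algebra, applied
to the lift `D` of `μ₁`). -/
theorem stmt_19 (N : ℕ) (hN : 4 ≤ N)
    (μ₁ : R0dual →ₗ[ZMod 2] R0dual)
    (hμ₁ : μ₁ (gen 0) = 0 ∧ μ₁ (gen 1) = 0 ∧
      μ₁ (gen 2) = gen 0 * gen 1 + gen 1 * gen 0 ∧
      ∀ a b, μ₁ (a * b) = μ₁ a * b + a * μ₁ b)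
    (D : FA →ₗ[ZMod 2] FA)
    (hD : D (FreeAlgebra.ι (ZMod 2) 0) = 0 ∧ D (FreeAlgebra.ι (ZMod 2) 1) = 0 ∧
      D (FreeAlgebra.ι (ZMod 2) 2) =
        FreeAlgebra.ι (ZMod 2) 0 * FreeAlgebra.ι (ZMod 2) 1 +
          FreeAlgebra.ι (ZMod 2) 1 * FreeAlgebra.ι (ZMod 2) 0 ∧
      ∀ x y : FA, D (x * y) = D x * y + x * D y)
    (P Q : List (Fin 3) → FA →ₗ[ZMod 2] R0dual)
    (hP : ∀ (b l : List (Fin 3)), P b (wordFA l) = phi2w N l b)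
    (hQ : ∀ (a l : List (Fin 3)), Q a (wordFA l) = phi2w N a l) :
    ∀ a b : List (Fin 3),
      phi1w N (a ++ b) + phi1w N a * phi1w N b + μ₁ (phi2w N a b) +
        P b (D (wordFA a)) + Q a (D (wordFA b)) = 0 := by
  obtain ⟨hm0, hm1, hm2, hmL⟩ := hμ₁
  obtain ⟨hg0, hg1, hg2, hgL⟩ := hD
  intro a b
  have hPsum : P b (D (wordFA a)) = ((subs a).map (fun m => phi2w N m b)).sum := by
    rw [D_wordFA hg0 hg1 hg2 hgL, map_list_sum, List.map_map]
    exact congrArg List.sum (List.map_congr_left (fun m _ => hP b m))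
  have hQsum : Q a (D (wordFA b)) = ((subs b).map (fun m => phi2w N a m)).sum := by
    rw [D_wordFA hg0 hg1 hg2 hgL, map_list_sum, List.map_map]
    exact congrArg List.sum (List.map_congr_left (fun m _ => hQ a m))
  rw [hPsum, hQsum, phi1_part N a b]
  by_cases hK0 : (a ++ b).count 2 = 0
  · -- no θ at all
    have hth : (2:Fin 3) ∉ a ++ b := List.count_eq_zero.mp hK0
    have hsa : subs a = [] := subs_thfree a (fun h => hth (List.mem_append_left _ h))
    have hsb : subs b = [] := subs_thfree b (fun h => hth (List.mem_append_right _ h))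
    rw [hsa, hsb]
    simp only [List.map_nil, List.sum_nil, add_zero]
    by_cases hw : wtp (a ++ b) ≤ N
    · rw [if_pos hw, phi2w_zero_of_wtp_le N a b hw, map_zero, add_zero]
    · rw [if_neg hw]
      by_cases hAB : wtp a ≤ N ∧ wtp b ≤ N
      · rw [if_pos hAB, phi2w_as_if N a b (by omega) hAB.1 hAB.2]
        by_cases hz : mono (a ++ b) = 0
        · rw [if_pos hz, hz, map_zero, add_zero]
        · rw [if_neg hz]
          have hch : (a ++ b).Chain' (· ≠ ·) := by
            by_contra hc
            exact hz (mono_zero_of_not_chain _ hc)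
          have hlw : wtp (a ++ b) = (a ++ b).length := by
            rw [wtp, hK0, add_zero]
          have hlen : 5 ≤ (a ++ b).length := by omega
          obtain ⟨c, x, y, hcxy⟩ := exists_append_two (a ++ b) (by omega)
          have hprune : prune (a ++ b) = c := by
            have hd1 : (c ++ [x, y]).dropLast = c ++ [x] := by
              rw [show c ++ [x, y] = (c ++ [x]) ++ [y] by simp, List.dropLast_concat]
            have hd2 : (c ++ [x]).dropLast = c := by
              rw [List.dropLast_concat]
            rw [prune_thfree _ hth, hcxy, hd1, hd2]
          have hcth : (2:Fin 3) ∉ c := fun h => hth (hcxy ▸ List.mem_append_left _ h)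
          rw [hprune, mu_mono_theta hm0 hm1 hm2 hmL c hcth]
          have hcne : c ≠ [] := by
            intro h
            rw [hcxy, h] at hlen
            simp at hlen
          rw [hcxy]
          rw [mu_phi_match c x y (hcxy ▸ hth) (hcxy ▸ hch) hcne]
          exact addself _
      · rw [if_neg hAB, phi2w_zero_of_sides N a b hAB, map_zero, add_zero]
  · have hc1 : 1 ≤ (a ++ b).count 2 := by omega
    rw [phi2w_zero_of_theta N a b hc1, map_zero, add_zero]
    by_cases hK2 : 2 ≤ (a ++ b).count 2
    · have hmz : mono (a ++ b) = 0 := mono_zero_of_two_theta _ hK2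
      have hT4 : ((subs a).map (fun m => phi2w N m b)).sum = 0 := by
        apply List.sum_eq_zero
        intro u hu
        obtain ⟨m, hm, rfl⟩ := List.mem_map.mp hu
        apply phi2w_zero_of_theta
        have h1 := (subs_mem a m hm).1
        rw [List.count_append] at hK2 ⊢
        omega
      have hT5 : ((subs b).map (fun m => phi2w N a m)).sum = 0 := by
        apply List.sum_eq_zero
        intro u hu
        obtain ⟨m, hm, rfl⟩ := List.mem_map.mp hu
        apply phi2w_zero_of_theta
        have h1 := (subs_mem b m hm).1
        rw [List.count_append] at hK2 ⊢
        omega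
      rw [hT4, hT5, add_zero, add_zero]
      split_ifs with h1 h2
      · rfl
      · exact hmz
      · rfl
    · have hK1 : (a ++ b).count 2 = 1 := by omega
      by_cases hw : wtp (a ++ b) ≤ N
      · rw [if_pos hw]
        have hT4 : ((subs a).map (fun m => phi2w N m b)).sum = 0 := by
          apply List.sum_eq_zero
          intro u hu
          obtain ⟨m, hm, rfl⟩ := List.mem_map.mp hu
          apply phi2w_zero_of_wtp_le
          rw [wtp_append, subs_wtp a m hm, ← wtp_append]
          exact hw
        have hT5 : ((subs b).map (fun m => phi2w N a m)).sum = 0 := by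
          apply List.sum_eq_zero
          intro u hu
          obtain ⟨m, hm, rfl⟩ := List.mem_map.mp hu
          apply phi2w_zero_of_wtp_le
          rw [wtp_append, subs_wtp b m hm, ← wtp_append]
          exact hw
        rw [hT4, hT5]
        simp
      · rw [if_neg hw]
        by_cases hAB : wtp a ≤ N ∧ wtp b ≤ N
        · rw [if_pos hAB]
          rw [List.count_append] at hK1
          rcases (by omega : a.count 2 = 1 ∧ b.count 2 = 0 ∨ a.count 2 = 0 ∧ b.count 2 = 1)
            with ⟨hac, hbc⟩ | ⟨hac, hbc⟩
          · -- θ in a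
            have hbth : (2:Fin 3) ∉ b := List.count_eq_zero.mp hbc
            have hsb : subs b = [] := subs_thfree b hbth
            rw [hsb]
            simp only [List.map_nil, List.sum_nil, add_zero]
            have hmem : (2:Fin 3) ∈ a := by rw [← List.count_pos_iff]; omega
            obtain ⟨p, q, hpq⟩ := List.append_of_mem hmem
            have hpqc : p.count 2 = 0 ∧ q.count 2 = 0 := by
              rw [hpq, List.count_append, List.count_cons_self] at hac
              omega
            have hp2 : (2:Fin 3) ∉ p := List.count_eq_zero.mp hpqc.1
            have hq2 : (2:Fin 3) ∉ q := List.count_eq_zero.mp hpqc.2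
            subst hpq
            rw [subs_split p q hp2 hq2]
            simp only [List.map_cons, List.map_nil, List.sum_cons, List.sum_nil, add_zero]
            have hwtp01 : wtp (p ++ 0 :: 1 :: q) = wtp (p ++ 2 :: q) := by
              simp only [wtp, List.length_append, List.length_cons, List.count_append,
                List.count_cons_self,
                List.count_cons_of_ne (show (0:Fin 3) ≠ 2 by decide),
                List.count_cons_of_ne (show (1:Fin 3) ≠ 2 by decide)]
              omega
            have hwtp10 : wtp (p ++ 1 :: 0 :: q) = wtp (p ++ 2 :: q) := by
              simp only [wtp, List.length_append, List.length_cons, List.count_append,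
                List.count_cons_self,
                List.count_cons_of_ne (show (0:Fin 3) ≠ 2 by decide),
                List.count_cons_of_ne (show (1:Fin 3) ≠ 2 by decide)]
              omega
            have hwval : N < wtp ((p ++ 2 :: q) ++ b) := Nat.lt_of_not_le hw
            rw [phi2w_as_if N (p ++ 0 :: 1 :: q) b
                (by rw [wtp_append, hwtp01, ← wtp_append]; exact hwval)
                (by rw [hwtp01]; exact hAB.1) hAB.2,
              phi2w_as_if N (p ++ 1 :: 0 :: q) b
                (by rw [wtp_append, hwtp10, ← wtp_append]; exact hwval)
                (by rw [hwtp10]; exact hAB.1) hAB.2]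
            have hassoc1 : (p ++ 0 :: 1 :: q) ++ b = p ++ 0 :: 1 :: (q ++ b) := by simp
            have hassoc2 : (p ++ 1 :: 0 :: q) ++ b = p ++ 1 :: 0 :: (q ++ b) := by simp
            rw [hassoc1, hassoc2]
            have hqb : (2:Fin 3) ∉ q ++ b := fun h =>
              (List.mem_append.mp h).elim hq2 hbth
            have hlen3 : 3 ≤ p.length + (q ++ b).length := by
              have hwt : wtp ((p ++ 2 :: q) ++ b) =
                  p.length + q.length + b.length + 2 := by
                simp only [wtp, List.length_append, List.length_cons, List.count_append,
                  List.count_cons_self, hpqc.1, hpqc.2, hbc]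
                omega
              rw [List.length_append]
              omega
            rw [core p (q ++ b) hp2 hqb hlen3]
            have hmid : (p ++ 2 :: q) ++ b = p ++ 2 :: (q ++ b) := by simp
            rw [hmid, mono_theta_mid]
            exact addself _
          · -- θ in b
            have hath : (2:Fin 3) ∉ a := List.count_eq_zero.mp hac
            have hsa : subs a = [] := subs_thfree a hath
            rw [hsa]
            simp only [List.map_nil, List.sum_nil, add_zero, zero_add]
            have hmem : (2:Fin 3) ∈ b := by rw [← List.count_pos_iff]; omega
            obtain ⟨p, q, hpq⟩ := List.append_of_mem hmem
            have hpqc : p.count 2 = 0 ∧ q.count 2 = 0 := by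
              rw [hpq, List.count_append, List.count_cons_self] at hbc
              omega
            have hp2 : (2:Fin 3) ∉ p := List.count_eq_zero.mp hpqc.1
            have hq2 : (2:Fin 3) ∉ q := List.count_eq_zero.mp hpqc.2
            subst hpq
            rw [subs_split p q hp2 hq2]
            simp only [List.map_cons, List.map_nil, List.sum_cons, List.sum_nil, add_zero]
            have hwtp01 : wtp (p ++ 0 :: 1 :: q) = wtp (p ++ 2 :: q) := by
              simp only [wtp, List.length_append, List.length_cons, List.count_append,
                List.count_cons_self,
                List.count_cons_of_ne (show (0:Fin 3) ≠ 2 by decide),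
                List.count_cons_of_ne (show (1:Fin 3) ≠ 2 by decide)]
              omega
            have hwtp10 : wtp (p ++ 1 :: 0 :: q) = wtp (p ++ 2 :: q) := by
              simp only [wtp, List.length_append, List.length_cons, List.count_append,
                List.count_cons_self,
                List.count_cons_of_ne (show (0:Fin 3) ≠ 2 by decide),
                List.count_cons_of_ne (show (1:Fin 3) ≠ 2 by decide)]
              omega
            have hwval : N < wtp (a ++ (p ++ 2 :: q)) := Nat.lt_of_not_le hw
            rw [phi2w_as_if N a (p ++ 0 :: 1 :: q)
                (by rw [wtp_append, hwtp01, ← wtp_append]; exact hwval)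
                hAB.1 (by rw [hwtp01]; exact hAB.2),
              phi2w_as_if N a (p ++ 1 :: 0 :: q)
                (by rw [wtp_append, hwtp10, ← wtp_append]; exact hwval)
                hAB.1 (by rw [hwtp10]; exact hAB.2)]
            have hassoc1 : a ++ (p ++ 0 :: 1 :: q) = (a ++ p) ++ 0 :: 1 :: q := by simp
            have hassoc2 : a ++ (p ++ 1 :: 0 :: q) = (a ++ p) ++ 1 :: 0 :: q := by simp
            rw [hassoc1, hassoc2]
            have hap : (2:Fin 3) ∉ a ++ p := fun h =>
              (List.mem_append.mp h).elim hath hp2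
            have hlen3 : 3 ≤ (a ++ p).length + q.length := by
              have hwt : wtp (a ++ (p ++ 2 :: q)) =
                  a.length + p.length + q.length + 2 := by
                simp only [wtp, List.length_append, List.length_cons, List.count_append,
                  List.count_cons_self, hpqc.1, hpqc.2, hac]
                omega
              rw [List.length_append]
              omega
            rw [core (a ++ p) q hap hq2 hlen3]
            have hmid : a ++ (p ++ 2 :: q) = (a ++ p) ++ 2 :: q := by simp
            rw [hmid, mono_theta_mid]
            exact addself _
        · rw [if_neg hAB]
          have hT4 : ((subs a).map (fun m => phi2w N m b)).sum = 0 := by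
            apply List.sum_eq_zero
            intro u hu
            obtain ⟨m, hm, rfl⟩ := List.mem_map.mp hu
            apply phi2w_zero_of_sides
            intro hc
            exact hAB ⟨subs_wtp a m hm ▸ hc.1, hc.2⟩
          have hT5 : ((subs b).map (fun m => phi2w N a m)).sum = 0 := by
            apply List.sum_eq_zero
            intro u hu
            obtain ⟨m, hm, rfl⟩ := List.mem_map.mp hu
            apply phi2w_zero_of_sides
            intro hc
            exact hAB ⟨hc.1, subs_wtp b m hm ▸ hc.2⟩
          rw [hT4, hT5]
          simp

end
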